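/- If α ∈ (0,1) and χ ≥ 0 are fixed, then there is a constant C = C(α, χ) such that t^α e^{-βt} ∫₀^t s^{-α} (log₊(1/s))^χ e^{βs} ds ≤ C (log β)^χ / β uniformly for all t > 0 and β ≥ e. -/

import Mathlib

open Real MeasureTheory Set Filter

noncomputable section

/-- `log₊ a = log (a + e)`. -/
def logPlus (a : ℝ) : ℝ := Real.log (a + Real.exp 1)

lemma log_split (s β : ℝ) (hs : 0 < s) (hβ : 1 ≤ β) :
    Real.log (1/s + Real.exp 1)
      ≤ Real.log (1/(β*s) + Real.exp 1) + Real.log (β + Real.exp 1) := by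
  set e := Real.exp 1 with he
  have hE1 : (1:ℝ) ≤ e := by have := Real.add_one_le_exp (1:ℝ); rw [he]; linarith
  have hβ0 : (0:ℝ) < β := by linarith
  have hβs : (0:ℝ) < β * s := by positivity
  have hexp : (1/(β*s) + e) * (β + e) = 1/s + e/(β*s) + e*β + e*e := by
    field_simp
    ring
  have hle : 1/s + e ≤ (1/(β*s) + e) * (β + e) := by
    rw [hexp]
    have h1 : (0:ℝ) ≤ e/(β*s) := by positivity
    have h2 : e ≤ e*β := by nlinarith
    have h3 : e ≤ e*e := by nlinarith
    nlinarith
  calc Real.log (1/s + e) ≤ Real.log ((1/(β*s) + e) * (β + e)) :=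
      Real.log_le_log (by positivity) hle
    _ = Real.log (1/(β*s) + e) + Real.log (β + e) :=
      Real.log_mul (by positivity) (by positivity)


lemma aux_intble (q β a b : ℝ) (hq : q < 1) :
    IntervalIntegrable (fun s => s ^ (-q) * Real.exp (β * s)) volume a b :=
  (intervalIntegral.intervalIntegrable_rpow' (by linarith)).mul_continuousOn
    ((Real.continuous_exp.comp (continuous_const.mul continuous_id)).continuousOn)

lemma aux_u_le_exp (u : ℝ) (hu : 0 ≤ u) : u ≤ Real.exp (u / 2) := by
  have h1 : u / 4 + 1 ≤ Real.exp (u / 4) := Real.add_one_le_exp (u / 4)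
  have h2 : Real.exp (u / 4) * Real.exp (u / 4) = Real.exp (u / 2) := by
    rw [← Real.exp_add]; ring_nf
  nlinarith [Real.exp_pos (u / 4), sq_nonneg (1 - u / 4)]

/-- Core estimate. -/
lemma core (q δ β t : ℝ) (hδ : 0 ≤ δ) (hδq : δ ≤ q) (hq1 : q < 1)
    (hβ : 1 ≤ β) (ht : 0 < t) :
    t ^ (q - δ) * Real.exp (-β * t) *
      (β ^ (-δ) * ∫ s in (0:ℝ)..t, s ^ (-q) * Real.exp (β * s))
      ≤ ((Real.exp 1 + 1) / (1 - q) + 2) / β := by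
  have hβ0 : (0:ℝ) < β := by linarith
  have h1q : (0:ℝ) < 1 - q := by linarith
  have hq0 : (0:ℝ) ≤ q := le_trans hδ hδq
  have hE1 : (1:ℝ) ≤ Real.exp 1 := by
    have := Real.add_one_le_exp (1:ℝ); linarith
  have hβδ : (0:ℝ) < β ^ (-δ) := Real.rpow_pos_of_pos hβ0 _
  have htq : (0:ℝ) ≤ t ^ (q - δ) := Real.rpow_nonneg ht.le _
  have hfinal : (1 / (1 - q) + 2) / β ≤ ((Real.exp 1 + 1) / (1 - q) + 2) / β := by
    gcongr
    linarith
  rcases le_total (β * t) 1 with hcase | hcase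
  · -- small βt : bound exp(βs) by e
    have hI0 : (0:ℝ) ≤ ∫ s in (0:ℝ)..t, s ^ (-q) * Real.exp (β * s) :=
      intervalIntegral.integral_nonneg ht.le fun s hs =>
        mul_nonneg (Real.rpow_nonneg hs.1 _) (Real.exp_pos _).le
    have hint : (∫ s in (0:ℝ)..t, s ^ (-q) * Real.exp (β * s))
        ≤ ∫ s in (0:ℝ)..t, s ^ (-q) * Real.exp 1 := by
      apply intervalIntegral.integral_mono_on ht.le (aux_intble q β 0 t hq1)
        ((intervalIntegral.intervalIntegrable_rpow' (r := -q) (by linarith)).mul_const _)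
      intro s hs
      have h1 : β * s ≤ 1 := by nlinarith [hs.1, hs.2]
      exact mul_le_mul_of_nonneg_left (Real.exp_le_exp.2 h1) (Real.rpow_nonneg hs.1 _)
    have hval : (∫ s in (0:ℝ)..t, s ^ (-q) * Real.exp 1)
        = t ^ (1 - q) / (1 - q) * Real.exp 1 := by
      rw [intervalIntegral.integral_mul_const, integral_rpow (Or.inl (by linarith)),
        Real.zero_rpow (by linarith : -q + 1 ≠ 0)]
      rw [show (-q + 1 : ℝ) = 1 - q by ring]
      ring
    have hexp1 : Real.exp (-β * t) ≤ 1 := by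
      rw [Real.exp_le_one_iff]; nlinarith
    have htβ : t ≤ β⁻¹ := by
      rw [← one_div, le_div_iff₀ hβ0]; linarith
    have key : t ^ (q - δ) * (t ^ (1 - q) / (1 - q)) * β ^ (-δ)
        ≤ 1 / (1 - q) * β⁻¹ := by
      have h1 : t ^ (q - δ) * t ^ (1 - q) = t ^ (1 - δ) := by
        rw [← Real.rpow_add ht]; ring_nf
      have h2 : t ^ (1 - δ) ≤ (β⁻¹) ^ (1 - δ) :=
        Real.rpow_le_rpow ht.le htβ (by linarith)
      have h3 : (β⁻¹ : ℝ) ^ (1 - δ) * β ^ (-δ) = β⁻¹ := by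
        rw [Real.inv_rpow hβ0.le, ← Real.rpow_neg hβ0.le, ← Real.rpow_add hβ0,
          show -(1 - δ) + -δ = -1 by ring, Real.rpow_neg_one]
      calc t ^ (q - δ) * (t ^ (1 - q) / (1 - q)) * β ^ (-δ)
          = t ^ (1 - δ) * β ^ (-δ) / (1 - q) := by rw [← h1]; ring
        _ ≤ (β⁻¹) ^ (1 - δ) * β ^ (-δ) / (1 - q) := by gcongr
        _ = 1 / (1 - q) * β⁻¹ := by rw [h3]; ring
    calc t ^ (q - δ) * Real.exp (-β * t) * (β ^ (-δ) * ∫ s in (0:ℝ)..t, s ^ (-q) * Real.exp (β * s))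
        ≤ t ^ (q - δ) * 1 * (β ^ (-δ) * (t ^ (1 - q) / (1 - q) * Real.exp 1)) := by
          apply mul_le_mul (mul_le_mul_of_nonneg_left hexp1 htq)
            (mul_le_mul_of_nonneg_left (hint.trans hval.le) hβδ.le)
            (mul_nonneg hβδ.le hI0) (by positivity)
      _ = (t ^ (q - δ) * (t ^ (1 - q) / (1 - q)) * β ^ (-δ)) * Real.exp 1 := by ring
      _ ≤ 1 / (1 - q) * β⁻¹ * Real.exp 1 :=
          mul_le_mul_of_nonneg_right key (Real.exp_pos 1).le
      _ ≤ ((Real.exp 1 + 1) / (1 - q) + 2) / β := by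
          have h4 : (0:ℝ) < (1 - q)⁻¹ := inv_pos.2 h1q
          have h5 : (0:ℝ) < β⁻¹ := inv_pos.2 hβ0
          rw [div_eq_mul_inv ((Real.exp 1 + 1) / (1 - q) + 2) β,
            div_eq_mul_inv (Real.exp 1 + 1) (1 - q), one_div]
          nlinarith [mul_pos h4 h5]
  · -- large βt
    have ht2 : (0:ℝ) < t / 2 := by linarith
    have hsplit : (∫ s in (0:ℝ)..t, s ^ (-q) * Real.exp (β * s))
        = (∫ s in (0:ℝ)..(t/2), s ^ (-q) * Real.exp (β * s))
          + ∫ s in (t/2)..t, s ^ (-q) * Real.exp (β * s) :=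
      (intervalIntegral.integral_add_adjacent_intervals (aux_intble q β 0 (t/2) hq1)
        (aux_intble q β (t/2) t hq1)).symm
    have hIa : (∫ s in (0:ℝ)..(t/2), s ^ (-q) * Real.exp (β * s))
        ≤ (t/2) ^ (1-q) / (1-q) * Real.exp (β * (t/2)) := by
      have h1 : (∫ s in (0:ℝ)..(t/2), s ^ (-q) * Real.exp (β * s))
          ≤ ∫ s in (0:ℝ)..(t/2), s ^ (-q) * Real.exp (β * (t/2)) := by
        apply intervalIntegral.integral_mono_on ht2.le (aux_intble q β 0 (t/2) hq1)
          ((intervalIntegral.intervalIntegrable_rpow' (r := -q) (by linarith)).mul_const _)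
        intro s hs
        exact mul_le_mul_of_nonneg_left
          (Real.exp_le_exp.2 (mul_le_mul_of_nonneg_left hs.2 hβ0.le))
          (Real.rpow_nonneg hs.1 _)
      rw [intervalIntegral.integral_mul_const, integral_rpow (Or.inl (by linarith)),
        Real.zero_rpow (by linarith : -q + 1 ≠ 0),
        show (-q + 1 : ℝ) = 1 - q by ring] at h1
      calc (∫ s in (0:ℝ)..(t/2), s ^ (-q) * Real.exp (β * s))
          ≤ ((t/2) ^ (1-q) - 0) / (1 - q) * Real.exp (β * (t/2)) := h1
        _ = (t/2) ^ (1-q) / (1-q) * Real.exp (β * (t/2)) := by ring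
    have hIb : (∫ s in (t/2)..t, s ^ (-q) * Real.exp (β * s))
        ≤ (t/2) ^ (-q) * (Real.exp (β * t) / β) := by
      have h1 : (∫ s in (t/2)..t, s ^ (-q) * Real.exp (β * s))
          ≤ ∫ s in (t/2)..t, (t/2) ^ (-q) * Real.exp (β * s) := by
        apply intervalIntegral.integral_mono_on (by linarith) (aux_intble q β (t/2) t hq1)
          (((Real.continuous_exp.comp (continuous_const.mul continuous_id)).intervalIntegrable
            _ _).const_mul _)
        intro s hs
        exact mul_le_mul_of_nonneg_right
          (Real.rpow_le_rpow_of_nonpos ht2 hs.1 (by linarith))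
          (Real.exp_pos _).le
      have h2 : (∫ s in (t/2)..t, Real.exp (β * s))
          = β⁻¹ * (Real.exp (β * t) - Real.exp (β * (t/2))) := by
        rw [intervalIntegral.integral_comp_mul_left (fun x => Real.exp x) hβ0.ne',
          integral_exp, smul_eq_mul]
      calc (∫ s in (t/2)..t, s ^ (-q) * Real.exp (β * s))
          ≤ ∫ s in (t/2)..t, (t/2) ^ (-q) * Real.exp (β * s) := h1
        _ = (t/2) ^ (-q) * (β⁻¹ * (Real.exp (β * t) - Real.exp (β * (t/2)))) := by
            rw [intervalIntegral.integral_const_mul, h2]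
        _ ≤ (t/2) ^ (-q) * (Real.exp (β * t) / β) := by
            apply mul_le_mul_of_nonneg_left _ (Real.rpow_nonneg ht2.le _)
            rw [div_eq_mul_inv (Real.exp (β * t)) β]
            nlinarith [mul_nonneg (inv_pos.2 hβ0).le (Real.exp_pos (β * (t/2))).le]
    -- algebra facts
    have htβ1 : (1:ℝ) ≤ t * β := by nlinarith
    have hmulδ : (t * β) ^ (-δ) ≤ 1 :=
      Real.rpow_le_one_of_one_le_of_nonpos htβ1 (by linarith)
    have hP : t ^ (1-δ) * β ^ (-δ) ≤ t := by
      have g1 : t ^ (1-δ:ℝ) = t * t ^ (-δ) := by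
        rw [show (1-δ:ℝ) = 1 + -δ by ring, Real.rpow_add ht, Real.rpow_one]
      rw [g1, mul_assoc, ← Real.mul_rpow ht.le hβ0.le]
      nlinarith [Real.rpow_nonneg (mul_nonneg ht.le hβ0.le) (-δ)]
    have f3 : Real.exp (-β * t) * Real.exp (β * (t/2)) = Real.exp (-(β * t) / 2) := by
      rw [← Real.exp_add]; congr 1; ring
    have f4 : t * Real.exp (-(β * t) / 2) ≤ β⁻¹ := by
      have h := aux_u_le_exp (β * t) (by positivity)
      have hE2 := Real.exp_pos (β * t / 2)
      have h5 : β * t / Real.exp (β * t / 2) ≤ 1 := (div_le_one hE2).2 h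
      have heq : t * Real.exp (-(β * t) / 2) = (β * t / Real.exp (β * t / 2)) * β⁻¹ := by
        rw [neg_div, Real.exp_neg]
        field_simp
      rw [heq]
      calc (β * t / Real.exp (β * t / 2)) * β⁻¹ ≤ 1 * β⁻¹ :=
          mul_le_mul_of_nonneg_right h5 (by positivity)
        _ = β⁻¹ := one_mul _
    -- term A bound
    have hA : t ^ (q-δ) * Real.exp (-β*t) * (β ^ (-δ) * ((t/2) ^ (1-q) / (1-q) * Real.exp (β * (t/2))))
        ≤ 1/(1-q) * β⁻¹ := by
      have f1 : (t/2:ℝ) ^ (1-q) ≤ t ^ (1-q) :=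
        Real.rpow_le_rpow (by positivity) (by linarith) (by linarith)
      have e2 : t ^ (1-δ:ℝ) = t ^ (q-δ) * t ^ (1-q) := by
        rw [← Real.rpow_add ht]; ring_nf
      calc t ^ (q-δ) * Real.exp (-β*t) * (β ^ (-δ) * ((t/2) ^ (1-q) / (1-q) * Real.exp (β * (t/2))))
          ≤ t ^ (q-δ) * Real.exp (-β*t) * (β ^ (-δ) * (t ^ (1-q) / (1-q) * Real.exp (β * (t/2)))) := by
            gcongr
        _ = (t ^ (1-δ) * β ^ (-δ)) * ((Real.exp (-β*t) * Real.exp (β * (t/2))) * (1-q)⁻¹) := by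
            rw [e2]; ring
        _ ≤ t * (Real.exp (-(β * t) / 2) * (1-q)⁻¹) := by
            rw [f3]
            apply mul_le_mul hP le_rfl (by positivity) ht.le
        _ = (t * Real.exp (-(β * t) / 2)) * (1-q)⁻¹ := by ring
        _ ≤ β⁻¹ * (1-q)⁻¹ := mul_le_mul_of_nonneg_right f4 (by positivity)
        _ = 1/(1-q) * β⁻¹ := by rw [one_div]; ring
    -- term B bound
    have hB : t ^ (q-δ) * Real.exp (-β*t) * (β ^ (-δ) * ((t/2) ^ (-q) * (Real.exp (β * t) / β)))
        ≤ 2 * β⁻¹ := by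
      have e1 : (t/2:ℝ) ^ (-q) = t ^ (-q) * 2 ^ q := by
        rw [div_eq_mul_inv, Real.mul_rpow ht.le (by norm_num),
          Real.inv_rpow (by norm_num : (0:ℝ) ≤ 2), ← Real.rpow_neg (by norm_num : (0:ℝ) ≤ 2),
          neg_neg]
      have e2 : t ^ (-δ:ℝ) = t ^ (q-δ) * t ^ (-q) := by
        rw [← Real.rpow_add ht]; ring_nf
      have e5 : (2:ℝ) ^ q ≤ 2 := by
        calc (2:ℝ) ^ q ≤ 2 ^ (1:ℝ) := Real.rpow_le_rpow_of_exponent_le one_le_two hq1.le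
          _ = 2 := Real.rpow_one 2
      have e6 : Real.exp (-β*t) * Real.exp (β*t) = 1 := by
        rw [← Real.exp_add]; simp
      calc t ^ (q-δ) * Real.exp (-β*t) * (β ^ (-δ) * ((t/2) ^ (-q) * (Real.exp (β * t) / β)))
          = (t ^ (-δ) * β ^ (-δ)) * ((2:ℝ) ^ q * ((Real.exp (-β*t) * Real.exp (β*t)) * β⁻¹)) := by
            rw [e1, e2]; ring
        _ = ((t * β) ^ (-δ)) * ((2:ℝ) ^ q * β⁻¹) := by
            rw [← Real.mul_rpow ht.le hβ0.le, e6]; ring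
        _ ≤ 1 * (2 * β⁻¹) := by
            apply mul_le_mul hmulδ _ (by positivity) one_pos.le
            exact mul_le_mul_of_nonneg_right e5 (by positivity)
        _ = 2 * β⁻¹ := one_mul _
    calc t ^ (q-δ) * Real.exp (-β * t) * (β ^ (-δ) * ∫ s in (0:ℝ)..t, s ^ (-q) * Real.exp (β * s))
        = t ^ (q-δ) * Real.exp (-β*t) * (β ^ (-δ) * ((∫ s in (0:ℝ)..(t/2), s ^ (-q) * Real.exp (β * s))
            + ∫ s in (t/2)..t, s ^ (-q) * Real.exp (β * s))) := by rw [← hsplit]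
      _ ≤ t ^ (q-δ) * Real.exp (-β*t) * (β ^ (-δ) * (((t/2) ^ (1-q) / (1-q) * Real.exp (β * (t/2)))
            + (t/2) ^ (-q) * (Real.exp (β * t) / β))) := by
          apply mul_le_mul_of_nonneg_left _ (by positivity)
          exact mul_le_mul_of_nonneg_left (add_le_add hIa hIb) hβδ.le
      _ = t ^ (q-δ) * Real.exp (-β*t) * (β ^ (-δ) * ((t/2) ^ (1-q) / (1-q) * Real.exp (β * (t/2))))
            + t ^ (q-δ) * Real.exp (-β*t) * (β ^ (-δ) * ((t/2) ^ (-q) * (Real.exp (β * t) / β))) := by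
          ring
      _ ≤ 1/(1-q) * β⁻¹ + 2 * β⁻¹ := add_le_add hA hB
      _ = (1/(1-q) + 2) / β := by rw [div_eq_mul_inv]; ring
      _ ≤ ((Real.exp 1 + 1) / (1 - q) + 2) / β := hfinal

lemma aux_two_rpow (a b χ : ℝ) (ha : 0 ≤ a) (hb : 0 ≤ b) (hχ : 0 ≤ χ) :
    (a + b) ^ χ ≤ 2 ^ χ * (a ^ χ + b ^ χ) := by
  rcases le_total a b with h | h
  · calc (a + b) ^ χ ≤ (2 * b) ^ χ :=
          Real.rpow_le_rpow (by linarith) (by linarith) hχ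
      _ = 2 ^ χ * b ^ χ := Real.mul_rpow (by norm_num) hb
      _ ≤ 2 ^ χ * (a ^ χ + b ^ χ) := by
        nlinarith [Real.rpow_nonneg ha χ, Real.rpow_pos_of_pos (show (0:ℝ) < 2 by norm_num) χ]
  · calc (a + b) ^ χ ≤ (2 * a) ^ χ :=
          Real.rpow_le_rpow (by linarith) (by linarith) hχ
      _ = 2 ^ χ * a ^ χ := Real.mul_rpow (by norm_num) ha
      _ ≤ 2 ^ χ * (a ^ χ + b ^ χ) := by
        nlinarith [Real.rpow_nonneg hb χ, Real.rpow_pos_of_pos (show (0:ℝ) < 2 by norm_num) χ]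

/-- Pointwise: `(log (1/x + e))^χ ≤ c^χ (x^(-εχ) + 1)` with `c = log(1+e) + 1/ε`. -/
lemma logPow_bound (χ ε : ℝ) (hχ : 0 ≤ χ) (hε : 0 < ε) (x : ℝ) (hx : 0 < x) :
    (Real.log (1/x + Real.exp 1)) ^ χ
      ≤ (Real.log (1 + Real.exp 1) + 1/ε) ^ χ * (x ^ (-(ε*χ)) + 1) := by
  set e := Real.exp 1 with he
  have hE1 : (1:ℝ) ≤ e := by have := Real.add_one_le_exp (1:ℝ); rw [he]; linarith
  have hx1 : (0:ℝ) < 1/x := one_div_pos.2 hx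
  have harg : (1:ℝ) ≤ 1/x + e := by linarith
  have hlog0 : (0:ℝ) ≤ Real.log (1/x + e) := Real.log_nonneg harg
  have hc1 : (1:ℝ) ≤ Real.log (1 + e) := by
    calc (1:ℝ) = Real.log e := (Real.log_exp 1).symm
      _ ≤ Real.log (1 + e) := Real.log_le_log (Real.exp_pos 1) (by linarith)
  have hc : (1:ℝ) ≤ Real.log (1 + e) + 1/ε := by
    have h0 : (0:ℝ) < 1/ε := by positivity
    linarith
  set c := Real.log (1 + e) + 1/ε with hcdef
  have hcχ1 : (1:ℝ) ≤ c ^ χ := by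
    calc (1:ℝ) = 1 ^ χ := (Real.one_rpow χ).symm
      _ ≤ c ^ χ := Real.rpow_le_rpow (by norm_num) hc hχ
  rcases le_total 1 x with hge | hle
  · -- x ≥ 1 : log(1/x+e) ≤ log(1+e) ≤ c
    have h1 : Real.log (1/x + e) ≤ c := by
      have : 1/x ≤ 1 := by rw [div_le_one hx]; linarith
      calc Real.log (1/x + e) ≤ Real.log (1 + e) :=
            Real.log_le_log (by linarith) (by linarith)
        _ ≤ c := by
            have h0 : (0:ℝ) < 1/ε := by positivity
            rw [hcdef]; linarith
    calc (Real.log (1/x + e)) ^ χ ≤ c ^ χ := Real.rpow_le_rpow hlog0 h1 hχ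
      _ = c ^ χ * 1 := (mul_one _).symm
      _ ≤ c ^ χ * (x ^ (-(ε*χ)) + 1) := by
          have := Real.rpow_nonneg hx.le (-(ε*χ))
          nlinarith
  · -- x ≤ 1
    have hxε : (1:ℝ) ≤ x ^ (-ε) :=
      Real.one_le_rpow_of_pos_of_le_one_of_nonpos hx hle (by linarith)
    have h1 : Real.log (1/x + e) ≤ c * x ^ (-ε) := by
      have hstep : Real.log (1/x + e) ≤ Real.log (1 + e) + Real.log x⁻¹ := by
        calc Real.log (1/x + e) ≤ Real.log ((1 + e) * x⁻¹) := by
              apply Real.log_le_log (by linarith)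
              rw [mul_comm, ← div_eq_inv_mul, le_div_iff₀ hx]
              have hex : e * x ≤ e := by nlinarith
              rw [add_mul, div_mul_cancel₀ _ hx.ne']
              linarith
          _ = Real.log (1 + e) + Real.log x⁻¹ :=
              Real.log_mul (by positivity) (by positivity)
      have hlx : Real.log x⁻¹ ≤ (x⁻¹) ^ ε / ε := Real.log_le_rpow_div (by positivity) hε
      have hinv : (x⁻¹ : ℝ) ^ ε = x ^ (-ε) := by
        rw [← Real.rpow_neg_one x, ← Real.rpow_mul hx.le]
        norm_num
      calc Real.log (1/x + e) ≤ Real.log (1 + e) + x ^ (-ε) / ε := by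
            rw [← hinv]; linarith
        _ ≤ Real.log (1 + e) * x ^ (-ε) + (1/ε) * x ^ (-ε) := by
            have h2 : Real.log (1 + e) ≤ Real.log (1 + e) * x ^ (-ε) := by nlinarith
            have h3 : x ^ (-ε) / ε = (1/ε) * x ^ (-ε) := by ring
            linarith
        _ = c * x ^ (-ε) := by rw [hcdef]; ring
    calc (Real.log (1/x + e)) ^ χ ≤ (c * x ^ (-ε)) ^ χ := Real.rpow_le_rpow hlog0 h1 hχ
      _ = c ^ χ * (x ^ (-ε)) ^ χ := Real.mul_rpow (by linarith) (by positivity)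
      _ = c ^ χ * x ^ (-(ε*χ)) := by
          rw [← Real.rpow_mul hx.le]
          ring_nf
      _ ≤ c ^ χ * (x ^ (-(ε*χ)) + 1) := by nlinarith

set_option maxHeartbeats 1000000 in
theorem weighted_log_integral_bound_large_beta
    (α χ : ℝ) (hα : α ∈ Set.Ioo (0 : ℝ) 1) (hχ : 0 ≤ χ) :
    ∃ C : ℝ, 0 < C ∧ ∀ t β : ℝ, 0 < t → Real.exp 1 ≤ β →
      t ^ α * Real.exp (-β * t) *
        (∫ s in (0 : ℝ)..t, s ^ (-α) * (logPlus (1 / s)) ^ χ * Real.exp (β * s))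
        ≤ C * (Real.log β) ^ χ / β := by
  obtain ⟨hα0, hα1⟩ := hα
  have hE1 : (1:ℝ) ≤ Real.exp 1 := by have := Real.add_one_le_exp (1:ℝ); linarith
  have hE2 : (2:ℝ) ≤ Real.exp 1 := by
    have := Real.exp_one_gt_d9; norm_num at this; linarith
  -- choose ε and basic facts about δ = ε * χ
  obtain ⟨ε, hε, hδ0, hαδ⟩ : ∃ ε : ℝ, 0 < ε ∧ 0 ≤ ε * χ ∧ α + ε * χ < 1 := by
    have hεp : (0:ℝ) < (1 - α)/(2*(χ+1)) := div_pos (by linarith) (by positivity)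
    refine ⟨(1 - α)/(2*(χ+1)), hεp, mul_nonneg hεp.le hχ, ?_⟩
    have h1 : (1 - α)/(2*(χ+1)) * χ * (2*(χ+1)) = (1-α) * χ := by
      field_simp
    have h2 : (1-α) * χ < (1-α) * (2*(χ+1)) := by nlinarith
    have h3 : (1 - α)/(2*(χ+1)) * χ * (2*(χ+1)) < (1-α) * (2*(χ+1)) := by
      rw [h1]; exact h2
    have h4 := lt_of_mul_lt_mul_right h3 (by positivity : (0:ℝ) ≤ 2*(χ+1))
    linarith
  -- the pointwise log bound constant
  obtain ⟨A, hA1, hAbd⟩ : ∃ A : ℝ, 1 ≤ A ∧ ∀ x : ℝ, 0 < x →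
      (Real.log (1/x + Real.exp 1)) ^ χ ≤ A * (x ^ (-(ε*χ)) + 1) := by
    refine ⟨(Real.log (1 + Real.exp 1) + 1/ε) ^ χ, ?_, fun x hx => logPow_bound χ ε hχ hε x hx⟩
    have hc1 : (1:ℝ) ≤ Real.log (1 + Real.exp 1) + 1/ε := by
      have h2 : (1:ℝ) ≤ Real.log (1 + Real.exp 1) := by
        calc (1:ℝ) = Real.log (Real.exp 1) := (Real.log_exp 1).symm
          _ ≤ Real.log (1 + Real.exp 1) := Real.log_le_log (Real.exp_pos 1) (by linarith)
      have h3 : (0:ℝ) < 1/ε := by positivity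
      linarith
    calc (1:ℝ) = 1 ^ χ := (Real.one_rpow χ).symm
      _ ≤ (Real.log (1 + Real.exp 1) + 1/ε) ^ χ := Real.rpow_le_rpow zero_le_one hc1 hχ
  -- two applications of the core estimate
  obtain ⟨C1, hC1pos, hcore1⟩ : ∃ C1 : ℝ, 0 < C1 ∧ ∀ β t : ℝ, 1 ≤ β → 0 < t →
      t ^ α * Real.exp (-β * t) *
        (β ^ (-(ε*χ)) * ∫ s in (0:ℝ)..t, s ^ (-(α+ε*χ)) * Real.exp (β * s)) ≤ C1/β := by
    refine ⟨(Real.exp 1 + 1)/(1-(α+ε*χ)) + 2, ?_, fun β t hβ ht => ?_⟩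
    · have h1 : (0:ℝ) < 1-(α+ε*χ) := by linarith
      positivity
    · have h := core (α+ε*χ) (ε*χ) β t hδ0 (by linarith) hαδ hβ ht
      rwa [show (α+ε*χ-ε*χ:ℝ) = α by ring] at h
  obtain ⟨C2, hC2pos, hcore2⟩ : ∃ C2 : ℝ, 0 < C2 ∧ ∀ β t : ℝ, 1 ≤ β → 0 < t →
      t ^ α * Real.exp (-β * t) *
        (∫ s in (0:ℝ)..t, s ^ (-α) * Real.exp (β * s)) ≤ C2/β := by
    refine ⟨(Real.exp 1 + 1)/(1-α) + 2, ?_, fun β t hβ ht => ?_⟩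
    · have h1 : (0:ℝ) < 1-α := by linarith
      positivity
    · have h := core α 0 β t le_rfl hα0.le hα1 hβ ht
      rwa [sub_zero, neg_zero, Real.rpow_zero, one_mul] at h
  have hT2 : (1:ℝ) ≤ 2 ^ χ := by
    calc (1:ℝ) = 2 ^ (0:ℝ) := (Real.rpow_zero 2).symm
      _ ≤ 2 ^ χ := Real.rpow_le_rpow_of_exponent_le one_le_two hχ
  refine ⟨(2:ℝ)^χ * (A + 2^χ) * (C1 + C2),
    mul_pos (mul_pos (by linarith : (0:ℝ) < 2^χ) (by linarith)) (by linarith),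
    fun t β ht hβe => ?_⟩
  have hβ1 : (1:ℝ) ≤ β := le_trans hE1 hβe
  have hβ0 : (0:ℝ) < β := by linarith
  have hlogβ : (1:ℝ) ≤ Real.log β := by
    calc (1:ℝ) = Real.log (Real.exp 1) := (Real.log_exp 1).symm
      _ ≤ Real.log β := Real.log_le_log (Real.exp_pos 1) hβe
  have hG1 : (1:ℝ) ≤ Real.log β ^ χ := by
    calc (1:ℝ) = 1 ^ χ := (Real.one_rpow χ).symm
      _ ≤ Real.log β ^ χ := Real.rpow_le_rpow zero_le_one hlogβ hχ
  have hG0 : (0:ℝ) ≤ Real.log β ^ χ := by linarith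
  have hK0 : (0:ℝ) < (2:ℝ)^χ * (A + 2^χ) := by nlinarith
  -- pointwise bound on the integrand
  have hpt : ∀ s ∈ Icc (0:ℝ) t,
      s ^ (-α) * (logPlus (1/s)) ^ χ * Real.exp (β*s)
        ≤ ((2:ℝ)^χ * (A + 2^χ)) * Real.log β ^ χ *
            (β ^ (-(ε*χ)) * (s ^ (-(α+ε*χ)) * Real.exp (β*s)) + s ^ (-α) * Real.exp (β*s)) := by
    intro s hs
    rcases hs.1.eq_or_lt with h0 | hs0
    · rw [← h0]
      simp [Real.zero_rpow (show (-α:ℝ) ≠ 0 from by intro h; rw [neg_eq_zero] at h; linarith),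
        Real.zero_rpow (show (-(α+ε*χ):ℝ) ≠ 0 from by intro h; rw [neg_eq_zero] at h; linarith)]
      rw [Real.zero_rpow (show (-(ε*χ) + -α : ℝ) ≠ 0 from by intro h; linarith)]
      simp
    · have hβs : (0:ℝ) < β * s := by positivity
      have h1s : (0:ℝ) < 1/s := by positivity
      have h1βs : (0:ℝ) < 1/(β*s) := by positivity
      have hl1 : (0:ℝ) ≤ Real.log (1/(β*s) + Real.exp 1) := Real.log_nonneg (by linarith)
      have hl2 : (0:ℝ) ≤ Real.log (β + Real.exp 1) := Real.log_nonneg (by linarith)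
      have hl0 : (0:ℝ) ≤ Real.log (1/s + Real.exp 1) := Real.log_nonneg (by linarith)
      have step1 : (logPlus (1/s)) ^ χ
          ≤ 2^χ * ((Real.log (1/(β*s) + Real.exp 1)) ^ χ + (Real.log (β + Real.exp 1)) ^ χ) := by
        calc (logPlus (1/s)) ^ χ
            ≤ (Real.log (1/(β*s) + Real.exp 1) + Real.log (β + Real.exp 1)) ^ χ :=
              Real.rpow_le_rpow hl0 (log_split s β hs0 hβ1) hχ
          _ ≤ 2^χ * ((Real.log (1/(β*s) + Real.exp 1)) ^ χ + (Real.log (β + Real.exp 1)) ^ χ) :=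
              aux_two_rpow _ _ χ hl1 hl2 hχ
      have step3 : (Real.log (1/(β*s) + Real.exp 1)) ^ χ ≤ A * ((β*s) ^ (-(ε*χ)) + 1) :=
        hAbd (β*s) hβs
      have step4 : (Real.log (β + Real.exp 1)) ^ χ ≤ 2^χ * Real.log β ^ χ := by
        have hββ : β + Real.exp 1 ≤ β * β := by nlinarith
        have h4 : Real.log (β + Real.exp 1) ≤ 2 * Real.log β := by
          calc Real.log (β + Real.exp 1) ≤ Real.log (β * β) :=
              Real.log_le_log (by positivity) hββ
            _ = Real.log β + Real.log β := Real.log_mul hβ0.ne' hβ0.ne'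
            _ = 2 * Real.log β := by ring
        calc (Real.log (β + Real.exp 1)) ^ χ ≤ (2 * Real.log β) ^ χ :=
              Real.rpow_le_rpow hl2 h4 hχ
          _ = 2 ^ χ * Real.log β ^ χ := Real.mul_rpow (by norm_num) (by linarith)
      have hX0 : (0:ℝ) ≤ (β*s) ^ (-(ε*χ)) := Real.rpow_nonneg hβs.le _
      have hlog_total : (logPlus (1/s)) ^ χ
          ≤ ((2:ℝ)^χ * (A + 2^χ)) * (Real.log β ^ χ * ((β*s) ^ (-(ε*χ)) + 1)) := by
        have inner : A * ((β*s) ^ (-(ε*χ)) + 1) + 2^χ * Real.log β ^ χ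
            ≤ (A + 2^χ) * (Real.log β ^ χ * ((β*s) ^ (-(ε*χ)) + 1)) := by
          nlinarith [mul_nonneg (mul_nonneg (by linarith : (0:ℝ) ≤ A)
              (by linarith : (0:ℝ) ≤ Real.log β ^ χ - 1)) hX0,
            mul_nonneg (by linarith : (0:ℝ) ≤ A)
              (by linarith : (0:ℝ) ≤ Real.log β ^ χ - 1),
            mul_nonneg (mul_nonneg (by linarith : (0:ℝ) ≤ (2:ℝ)^χ) hG0) hX0]
        calc (logPlus (1/s)) ^ χ
            ≤ 2^χ * (A * ((β*s) ^ (-(ε*χ)) + 1) + 2^χ * Real.log β ^ χ) := by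
              refine step1.trans ?_
              exact mul_le_mul_of_nonneg_left (add_le_add step3 step4) (by linarith)
          _ ≤ 2^χ * ((A + 2^χ) * (Real.log β ^ χ * ((β*s) ^ (-(ε*χ)) + 1))) :=
              mul_le_mul_of_nonneg_left inner (by linarith)
          _ = ((2:ℝ)^χ * (A + 2^χ)) * (Real.log β ^ χ * ((β*s) ^ (-(ε*χ)) + 1)) := by ring
      have hrw : ((2:ℝ)^χ * (A + 2^χ)) * Real.log β ^ χ *
            (β ^ (-(ε*χ)) * (s ^ (-(α+ε*χ)) * Real.exp (β*s)) + s ^ (-α) * Real.exp (β*s))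
          = s ^ (-α) * (((2:ℝ)^χ * (A + 2^χ)) * (Real.log β ^ χ * ((β*s) ^ (-(ε*χ)) + 1)))
              * Real.exp (β*s) := by
        rw [Real.mul_rpow hβ0.le hs0.le, show (-(α+ε*χ):ℝ) = -α + -(ε*χ) by ring,
          Real.rpow_add hs0]
        ring
      rw [hrw]
      exact mul_le_mul_of_nonneg_right
        (mul_le_mul_of_nonneg_left hlog_total (Real.rpow_nonneg hs.1 _))
        (Real.exp_pos _).le
  -- integrability
  have hg1 := aux_intble (α+ε*χ) β 0 t (by linarith)
  have hg2 := aux_intble α β 0 t (by linarith)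
  have hD_int : IntervalIntegrable (fun s =>
      ((2:ℝ)^χ * (A + 2^χ)) * Real.log β ^ χ *
        (β ^ (-(ε*χ)) * (s ^ (-(α+ε*χ)) * Real.exp (β*s)) + s ^ (-α) * Real.exp (β*s)))
      volume 0 t := ((hg1.const_mul _).add hg2).const_mul _
  have hcont : ContinuousOn (fun s : ℝ => s ^ (-α) * (logPlus (1/s)) ^ χ * Real.exp (β*s))
      (Ioc (0:ℝ) t) := by
    intro s hs
    have hs0 : (0:ℝ) < s := hs.1
    apply ContinuousAt.continuousWithinAt
    refine ContinuousAt.mul (ContinuousAt.mul ?_ ?_) ?_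
    · exact Real.continuousAt_rpow_const s (-α) (Or.inl hs0.ne')
    · refine ContinuousAt.rpow_const ?_ (Or.inr hχ)
      refine ContinuousAt.log ?_ ?_
      · exact (continuousAt_const.div continuousAt_id hs0.ne').add continuousAt_const
      · have h1 : (0:ℝ) < 1/s := by positivity
        have h2 := Real.exp_pos 1
        refine ne_of_gt ?_
        linarith
    · exact (Real.continuous_exp.comp (continuous_const.mul continuous_id)).continuousAt
  have hf_meas : AEStronglyMeasurable (fun s : ℝ => s ^ (-α) * (logPlus (1/s)) ^ χ * Real.exp (β*s))
      (volume.restrict (Set.uIoc (0:ℝ) t)) := by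
    rw [uIoc_of_le ht.le]
    exact hcont.aestronglyMeasurable measurableSet_Ioc
  have hf_int : IntervalIntegrable
      (fun s : ℝ => s ^ (-α) * (logPlus (1/s)) ^ χ * Real.exp (β*s)) volume 0 t := by
    apply hD_int.mono_fun' hf_meas
    rw [uIoc_of_le ht.le]
    filter_upwards [ae_restrict_mem measurableSet_Ioc] with x hx
    have hx0 : (0:ℝ) < x := hx.1
    have hfx0 : (0:ℝ) ≤ x ^ (-α) * (logPlus (1/x)) ^ χ * Real.exp (β*x) := by
      have h1 : (0:ℝ) ≤ Real.log (1/x + Real.exp 1) :=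
        Real.log_nonneg (by nlinarith [one_div_pos.2 hx0])
      have h2 : (0:ℝ) ≤ (logPlus (1/x)) ^ χ := Real.rpow_nonneg h1 χ
      positivity
    show ‖x ^ (-α) * (logPlus (1/x)) ^ χ * Real.exp (β*x)‖ ≤ _
    rw [Real.norm_eq_abs, abs_of_nonneg hfx0]
    exact hpt x ⟨hx0.le, hx.2⟩
  -- put everything together
  have hmono : (∫ s in (0:ℝ)..t, s ^ (-α) * (logPlus (1/s)) ^ χ * Real.exp (β*s))
      ≤ ∫ s in (0:ℝ)..t,
          ((2:ℝ)^χ * (A + 2^χ)) * Real.log β ^ χ *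
            (β ^ (-(ε*χ)) * (s ^ (-(α+ε*χ)) * Real.exp (β*s)) + s ^ (-α) * Real.exp (β*s)) :=
    intervalIntegral.integral_mono_on ht.le hf_int hD_int hpt
  have hDval : (∫ s in (0:ℝ)..t,
        ((2:ℝ)^χ * (A + 2^χ)) * Real.log β ^ χ *
          (β ^ (-(ε*χ)) * (s ^ (-(α+ε*χ)) * Real.exp (β*s)) + s ^ (-α) * Real.exp (β*s)))
      = ((2:ℝ)^χ * (A + 2^χ)) * Real.log β ^ χ *
          (β ^ (-(ε*χ)) * (∫ s in (0:ℝ)..t, s ^ (-(α+ε*χ)) * Real.exp (β*s))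
            + ∫ s in (0:ℝ)..t, s ^ (-α) * Real.exp (β*s)) := by
    rw [intervalIntegral.integral_const_mul, intervalIntegral.integral_add (hg1.const_mul _) hg2,
      intervalIntegral.integral_const_mul]
  calc t ^ α * Real.exp (-β * t) *
        (∫ s in (0:ℝ)..t, s ^ (-α) * (logPlus (1/s)) ^ χ * Real.exp (β*s))
      ≤ t ^ α * Real.exp (-β * t) *
        (∫ s in (0:ℝ)..t,
          ((2:ℝ)^χ * (A + 2^χ)) * Real.log β ^ χ *
            (β ^ (-(ε*χ)) * (s ^ (-(α+ε*χ)) * Real.exp (β*s)) + s ^ (-α) * Real.exp (β*s))) :=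
        mul_le_mul_of_nonneg_left hmono (by positivity)
    _ = ((2:ℝ)^χ * (A + 2^χ)) * Real.log β ^ χ *
          ((t ^ α * Real.exp (-β * t) *
              (β ^ (-(ε*χ)) * ∫ s in (0:ℝ)..t, s ^ (-(α+ε*χ)) * Real.exp (β*s)))
            + (t ^ α * Real.exp (-β * t) * ∫ s in (0:ℝ)..t, s ^ (-α) * Real.exp (β*s))) := by
        rw [hDval]; ring
    _ ≤ ((2:ℝ)^χ * (A + 2^χ)) * Real.log β ^ χ * (C1/β + C2/β) := by
        apply mul_le_mul_of_nonneg_left (add_le_add (hcore1 β t hβ1 ht) (hcore2 β t hβ1 ht))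
        nlinarith
    _ = (2:ℝ)^χ * (A + 2^χ) * (C1 + C2) * Real.log β ^ χ / β := by ring

end
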